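/- Let G be a compact group acting ergodically and strongly continuously on a unital C*-algebra A, and let τ be the unique G-invariant state on A. Then τ is faithful on A, i.e. τ(a*a) = 0 implies a = 0. -/

import Mathlib

open MeasureTheory
open scoped ComplexOrder

lemma aux_smul_nonneg {A : Type*} [NonUnitalRing A] [StarRing A] [PartialOrder A]
    [StarOrderedRing A] [Module ℝ A] [StarModule ℝ A] [IsScalarTower ℝ A A]
    [SMulCommClass ℝ A A] {c : ℝ} (hc : 0 ≤ c) {x : A} (hx : 0 ≤ x) : 0 ≤ c • x := by
  rw [StarOrderedRing.nonneg_iff] at hx ⊢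
  refine AddSubmonoid.closure_induction ?_ ?_ ?_ hx
  · rintro _ ⟨s, rfl⟩
    apply AddSubmonoid.subset_closure
    refine ⟨Real.sqrt c • s, ?_⟩
    simp only [star_smul, star_trivial, smul_mul_smul_comm, Real.mul_self_sqrt hc]
  · simpa using zero_mem _
  · intro x y _ _ hx hy; simpa [smul_add] using add_mem hx hy

lemma aux_convex_nonneg {A : Type*} [NonUnitalRing A] [StarRing A] [PartialOrder A]
    [StarOrderedRing A] [Module ℝ A] [StarModule ℝ A] [IsScalarTower ℝ A A]
    [SMulCommClass ℝ A A] : Convex ℝ {x : A | 0 ≤ x} := fun x hx y hy s t hs ht _ =>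
  add_nonneg (aux_smul_nonneg hs hx) (aux_smul_nonneg ht hy)

lemma aux_setIntegral_nonneg {G : Type*} [MeasurableSpace G] (μ : Measure G) [IsFiniteMeasure μ]
    {A : Type*} [CStarAlgebra A] [PartialOrder A] [StarOrderedRing A]
    {f : G → A} (hf : Integrable f μ) {s : Set G} (hs : MeasurableSet s)
    (hpos : ∀ g ∈ s, 0 ≤ f g) :
    0 ≤ ∫ g in s, f g ∂μ := by
  by_cases h0 : μ s = 0
  · simp [Measure.restrict_eq_zero.mpr h0]
  · have havg : (⨍ g in s, f g ∂μ) ∈ {x : A | 0 ≤ x} := by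
      refine Convex.set_average_mem aux_convex_nonneg CStarAlgebra.isClosed_nonneg h0
        (measure_ne_top μ s) ?_ hf.integrableOn
      exact (ae_restrict_mem hs).mono hpos
    have htr : (μ s).toReal ≠ 0 := by
      simp [ENNReal.toReal_eq_zero_iff, h0, measure_ne_top μ s]
    have : ∫ g in s, f g ∂μ = (μ s).toReal • (⨍ g in s, f g ∂μ) := by
      rw [setAverage_eq, measureReal_def, smul_inv_smul₀ htr]
    rw [this]
    exact aux_smul_nonneg ENNReal.toReal_nonneg havg

/-- the unique `G`-invariant state `τ` of an ergodic strongly continuous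
action of a compact group `G` on a unital C*-algebra `A` (characterized by
`∫ β g a dg = τ(a) • 1`) is faithful: `τ (a* a) = 0 → a = 0`. -/
theorem stmt12 {G : Type*} [Group G] [TopologicalSpace G] [IsTopologicalGroup G]
    [CompactSpace G] [MeasurableSpace G] [BorelSpace G]
    (μ : Measure G) [μ.IsHaarMeasure] [IsProbabilityMeasure μ]
    {A : Type*} [NormedRing A] [StarRing A] [CStarRing A] [NormedAlgebra ℂ A]
    [StarModule ℂ A] [CompleteSpace A]
    (β : G →* (A ≃ₐ[ℂ] A))
    (hβstar : ∀ (g : G) (a : A), β g (star a) = star (β g a))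
    (hβcont : ∀ a : A, Continuous fun g => β g a)
    (hergodic : ∀ a : A, (∀ g : G, β g a = a) → ∃ c : ℂ, a = c • (1 : A))
    (τ : A →L[ℂ] ℂ) (hτ1 : τ 1 = 1) (hτpos : ∀ a, 0 ≤ τ (star a * a))
    (hτinv : ∀ a : A, ∫ g, β g a ∂μ = τ a • (1 : A)) :
    ∀ a : A, τ (star a * a) = 0 → a = 0 := by
  intro a hτa
  letI : CStarAlgebra A := {}
  letI : PartialOrder A := CStarAlgebra.spectralOrder A
  letI : StarOrderedRing A := CStarAlgebra.spectralOrderedRing A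
  set b : A := star a * a with hb
  have hbsa : IsSelfAdjoint b := IsSelfAdjoint.star_mul_self a
  have hb0 : (0 : A) ≤ b := star_mul_self_nonneg a
  have hcontf : Continuous fun g => β g b := hβcont b
  have hintf : Integrable (fun g => β g b) μ :=
    hcontf.integrable_of_hasCompactSupport (HasCompactSupport.of_compactSpace _)
  have hzero : ∫ g, β g b ∂μ = 0 := by
    rw [hτinv b, hτa, zero_smul]
  -- monotonicity of `algebraMap ℝ A`
  have halg : ∀ {r s : ℝ}, r ≤ s → algebraMap ℝ A r ≤ algebraMap ℝ A s := by
    intro r s hrs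
    rw [← sub_nonneg, ← map_sub, Algebra.algebraMap_eq_smul_one]
    exact aux_smul_nonneg (by linarith) (by simpa using star_mul_self_nonneg (1 : A))
  have key : ∀ ε : ℝ, 0 < ε → b ≤ algebraMap ℝ A ε := by
    intro ε hε
    set U : Set G := {g | ‖β g b - b‖ < ε} with hU
    have hUopen : IsOpen U := by
      have : Continuous fun g => ‖β g b - b‖ := (hcontf.sub continuous_const).norm
      exact isOpen_lt this continuous_const
    have hU1 : (1 : G) ∈ U := by simp [hU]; simpa [map_one] using hε
    have hUm : MeasurableSet U := hUopen.measurableSet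
    have hU0 : μ U ≠ 0 := (hUopen.measure_pos μ ⟨1, hU1⟩).ne'
    have hUtr : 0 < (μ U).toReal :=
      ENNReal.toReal_pos hU0 (measure_ne_top μ U)
    -- on U, b - ε ≤ β g b
    have hlow : ∀ g ∈ U, (0 : A) ≤ β g b - (b - algebraMap ℝ A ε) := by
      intro g hg
      have hsa : IsSelfAdjoint (β g b - b) := by
        rw [IsSelfAdjoint, star_sub, ← hβstar, hbsa.star_eq]
      have h1 : -(algebraMap ℝ A ‖β g b - b‖) ≤ β g b - b :=
        IsSelfAdjoint.neg_algebraMap_norm_le_self hsa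
      have h2 : -(algebraMap ℝ A ε) ≤ -(algebraMap ℝ A ‖β g b - b‖) :=
        neg_le_neg (halg (le_of_lt hg))
      have := h2.trans h1
      rw [sub_nonneg]
      calc b - algebraMap ℝ A ε = b + -(algebraMap ℝ A ε) := by abel
        _ ≤ b + (β g b - b) := by exact add_le_add_right this b
        _ = β g b := by abel
    -- integral over complement is nonneg
    have hcompl : (0 : A) ≤ ∫ g in Uᶜ, β g b ∂μ :=
      aux_setIntegral_nonneg μ hintf hUm.compl (fun g _ => by
        have hgb : (β g) b = star ((β g) a) * ((β g) a) := by
          rw [hb, map_mul, hβstar]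
        rw [hgb]; exact star_mul_self_nonneg _)
    -- integral over U dominates (μ U).toReal • (b - ε)
    have hUint : (0 : A) ≤ ∫ g in U, (β g b - (b - algebraMap ℝ A ε)) ∂μ :=
      aux_setIntegral_nonneg μ (hintf.sub (integrable_const _)) hUm hlow
    have hsplit : ∫ g in U, (β g b - (b - algebraMap ℝ A ε)) ∂μ
        = (∫ g in U, β g b ∂μ) - (μ U).toReal • (b - algebraMap ℝ A ε) := by
      rw [integral_sub hintf.integrableOn (integrable_const _), setIntegral_const, measureReal_def]
    have hUc : (μ U).toReal • (b - algebraMap ℝ A ε) ≤ ∫ g in U, β g b ∂μ := by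
      rw [hsplit, sub_nonneg] at hUint; exact hUint
    have hsum : (∫ g in U, β g b ∂μ) + (∫ g in Uᶜ, β g b ∂μ) = 0 := by
      rw [integral_add_compl hUm hintf, hzero]
    have hneg : ∫ g in U, β g b ∂μ ≤ 0 := by
      have : ∫ g in U, β g b ∂μ = -(∫ g in Uᶜ, β g b ∂μ) := by
        rw [eq_neg_iff_add_eq_zero]; exact hsum
      rw [this]
      simpa using hcompl
    have hfin : (μ U).toReal • (b - algebraMap ℝ A ε) ≤ 0 := hUc.trans hneg
    have hfin' : (0 : A) ≤ (μ U).toReal • (algebraMap ℝ A ε - b) := by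
      have := neg_nonneg.mpr hfin
      rwa [← smul_neg, neg_sub] at this
    have : (0 : A) ≤ algebraMap ℝ A ε - b := by
      have h := aux_smul_nonneg (c := ((μ U).toReal)⁻¹) (by positivity) hfin'
      rwa [inv_smul_smul₀ hUtr.ne'] at h
    rwa [sub_nonneg] at this
  have hnb : b = 0 := by
    rw [← norm_eq_zero]
    by_contra h
    have hpos' : 0 < ‖b‖ := lt_of_le_of_ne (norm_nonneg b) (Ne.symm h)
    have hle : ‖b‖ ≤ ‖b‖ / 2 :=
      (CStarAlgebra.norm_le_iff_le_algebraMap b (by linarith) hb0).mpr (key _ (by linarith))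
    linarith
  exact (CStarRing.star_mul_self_eq_zero_iff a).mp (hb ▸ hnb)
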